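/- Every finite simple graph G of class 1 (χ'(G) = Δ(G)) is an induced-degree-preserving subgraph of some Δ(G)-regular 1-factorizable finite simple graph H with Δ(H) = Δ(G); that is, G embeds as a subgraph of a Δ(G)-regular graph whose edge set decomposes into Δ(G) perfect matchings. -/

import Mathlib

open MvPolynomial

/-- An arbitrary linear labeling of a finite vertex type. -/
noncomputable def someLinearOrder (V : Type*) [Fintype V] : LinearOrder V :=
  LinearOrder.lift' (Fintype.equivFin V) (Fintype.equivFin V).injective

/-- The graph polynomial `∏_{ij ∈ E, i<j} (x_i − x_j)` with respect to a given
linear labeling of the vertices. -/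
noncomputable def graphPolyAux {V : Type*} [Fintype V] (lo : LinearOrder V)
    (G : SimpleGraph V) : MvPolynomial V ℤ :=
  letI := lo
  letI := Classical.decRel G.Adj
  ∏ p ∈ Finset.univ.filter (fun p : V × V => G.Adj p.1 p.2 ∧ p.1 < p.2), (X p.1 - X p.2)

/-- The graph polynomial of `G` (its monomial support does not depend on the labeling). -/
noncomputable def graphPoly {V : Type*} [Fintype V] (G : SimpleGraph V) : MvPolynomial V ℤ :=
  graphPolyAux (someLinearOrder V) G

/-- The Alon–Tarsi number of `G`: one plus the minimum, over monomials with nonzero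
coefficient in the graph polynomial, of the maximum exponent of a variable. -/
noncomputable def alonTarsiNumber {V : Type*} [Fintype V] (G : SimpleGraph V) : ℕ :=
  1 + sInf {d : ℕ | ∃ m ∈ (graphPoly G).support, d = Finset.univ.sup fun v => m v}

/-- `G` is colorable from any assignment of lists of size `t`. -/
def Choosable {V : Type*} (G : SimpleGraph V) (t : ℕ) : Prop :=
  ∀ L : V → Finset ℕ, (∀ v, (L v).card = t) →
    ∃ c : V → ℕ, (∀ v, c v ∈ L v) ∧ ∀ ⦃v w⦄, G.Adj v w → c v ≠ c w

/-- The choice number (list chromatic number) of `G`. -/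
noncomputable def choiceNumber {V : Type*} (G : SimpleGraph V) : ℕ :=
  sInf {t : ℕ | Choosable G t}

/-- `M` is a 1-factorization of `G` into `Δ` perfect matchings. -/
def IsOneFactorization {V : Type*} (G : SimpleGraph V) {Δ : ℕ}
    (M : Fin Δ → G.Subgraph) : Prop :=
  (∀ i, (M i).IsPerfectMatching) ∧
  (∀ i j, i ≠ j → Disjoint (M i).edgeSet (M j).edgeSet) ∧
  (⋃ i, (M i).edgeSet) = G.edgeSet

/-- `G` is 1-factorizable into `Δ` perfect matchings. -/
def OneFactorizable {V : Type*} (G : SimpleGraph V) (Δ : ℕ) : Prop :=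
  ∃ M : Fin Δ → G.Subgraph, IsOneFactorization G M

/-- The total graph of `G`, on vertex set `V(G) ⊕ E(G)`. -/
def totalGraph {V : Type*} (G : SimpleGraph V) : SimpleGraph (V ⊕ G.edgeSet) where
  Adj x y := match x, y with
    | .inl v, .inl w => G.Adj v w
    | .inl v, .inr e => v ∈ (e : Sym2 V)
    | .inr e, .inl v => v ∈ (e : Sym2 V)
    | .inr e, .inr f => e ≠ f ∧ ∃ v, v ∈ (e : Sym2 V) ∧ v ∈ (f : Sym2 V)
  symm := ⟨by
    rintro (v | e) (w | f) h
    · exact h.symm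
    · exact h
    · exact h
    · exact ⟨h.1.symm, h.2.imp fun v hv => ⟨hv.2, hv.1⟩⟩⟩
  loopless := ⟨by
    rintro (v | e) h
    · exact G.loopless.irrefl v h
    · exact h.1 rfl⟩

/-- The subdivision graph of `G`, on vertex set `V(G) ⊕ E(G)`. -/
def subdivisionGraph {V : Type*} (G : SimpleGraph V) : SimpleGraph (V ⊕ G.edgeSet) where
  Adj x y := match x, y with
    | .inl v, .inr e => v ∈ (e : Sym2 V)
    | .inr e, .inl v => v ∈ (e : Sym2 V)
    | _, _ => False
  symm := ⟨by rintro (v | e) (w | f) h <;> simp_all⟩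
  loopless := ⟨by rintro (v | e) h <;> simp_all⟩

/-- The square of a graph: adjacency at distance 1 or 2. -/
def squareGraph {W : Type*} (H : SimpleGraph W) : SimpleGraph W where
  Adj u v := u ≠ v ∧ (H.Adj u v ∨ ∃ w, H.Adj u w ∧ H.Adj w v)
  symm := ⟨fun u v ⟨hne, h⟩ =>
    ⟨hne.symm, h.imp (fun a => a.symm) fun ⟨w, h1, h2⟩ => ⟨w, h2.symm, h1.symm⟩⟩⟩
  loopless := ⟨fun u h => h.1 rfl⟩

section AuxDefs

variable {n Δ : ℕ}

def flipb (i : Fin Δ) (x : Fin Δ → Bool) : Fin Δ → Bool := Function.update x i (!x i)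

lemma flipb_flipb (i : Fin Δ) (x : Fin Δ → Bool) : flipb i (flipb i x) = x := by
  funext j
  by_cases hj : j = i
  · subst hj; simp [flipb]
  · simp [flipb, Function.update_of_ne hj]

lemma flipb_ne (i : Fin Δ) (x : Fin Δ → Bool) : flipb i x ≠ x := by
  intro h
  have := congrFun h i
  simp [flipb] at this

lemma flipb_idx_eq {i j : Fin Δ} {x : Fin Δ → Bool} (h : flipb i x = flipb j x) : i = j := by
  by_contra hij
  have := congrFun h i
  rw [show flipb i x i = !x i from by simp [flipb],
    show flipb j x i = x i from by simp [flipb, Function.update_of_ne hij]] at this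
  simp at this

def auxUsed (A : Fin n → Fin n → Prop) (col : ∀ a b, A a b → Fin Δ) (a : Fin n) (i : Fin Δ) :
    Prop := ∃ b, ∃ h : A a b, col a b h = i

def auxGraph (A : Fin n → Fin n → Prop) (hsymm : ∀ a b, A a b → A b a) (hirr : ∀ a, ¬A a a)
    (col : ∀ a b, A a b → Fin Δ) : SimpleGraph (Fin n × (Fin Δ → Bool)) where
  Adj p q := (A p.1 q.1 ∧ p.2 = q.2) ∨
    (p.1 = q.1 ∧ ∃ i, ¬auxUsed A col p.1 i ∧ q.2 = flipb i p.2)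
  symm := ⟨by
    rintro ⟨a, x⟩ ⟨b, y⟩ (⟨h, rfl⟩ | ⟨rfl, i, hu, rfl⟩)
    · exact Or.inl ⟨hsymm _ _ h, rfl⟩
    · exact Or.inr ⟨rfl, i, hu, (flipb_flipb i x).symm⟩⟩
  loopless := ⟨by
    rintro ⟨a, x⟩ (⟨h, -⟩ | ⟨-, i, -, hx⟩)
    · exact hirr a h
    · exact flipb_ne i x hx.symm⟩

def auxM (A : Fin n → Fin n → Prop) (hsymm : ∀ a b, A a b → A b a) (hirr : ∀ a, ¬A a a)
    (col : ∀ a b, A a b → Fin Δ)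
    (hcolsymm : ∀ a b (h : A a b), col a b h = col b a (hsymm a b h)) (i : Fin Δ) :
    (auxGraph A hsymm hirr col).Subgraph where
  verts := Set.univ
  Adj p q := ((∃ h : A p.1 q.1, col p.1 q.1 h = i) ∧ p.2 = q.2) ∨
    (p.1 = q.1 ∧ ¬auxUsed A col p.1 i ∧ q.2 = flipb i p.2)
  adj_sub := by
    rintro ⟨a, x⟩ ⟨b, y⟩ (⟨⟨h, -⟩, rfl⟩ | ⟨rfl, hu, rfl⟩)
    · exact Or.inl ⟨h, rfl⟩
    · exact Or.inr ⟨rfl, i, hu, rfl⟩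
  edge_vert := fun _ => Set.mem_univ _
  symm := ⟨by
    rintro ⟨a, x⟩ ⟨b, y⟩ (⟨⟨h, hc⟩, rfl⟩ | ⟨rfl, hu, rfl⟩)
    · exact Or.inl ⟨⟨hsymm a b h, (hcolsymm a b h) ▸ hc⟩, rfl⟩
    · exact Or.inr ⟨rfl, hu, (flipb_flipb i x).symm⟩⟩

theorem aux_factorization (A : Fin n → Fin n → Prop) (hsymm : ∀ a b, A a b → A b a)
    (hirr : ∀ a, ¬A a a) (col : ∀ a b, A a b → Fin Δ)
    (hcolsymm : ∀ a b (h : A a b), col a b h = col b a (hsymm a b h))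
    (hinj : ∀ a b b' (h : A a b) (h' : A a b'), col a b h = col a b' h' → b = b') :
    IsOneFactorization (auxGraph A hsymm hirr col) (auxM A hsymm hirr col hcolsymm) := by
  refine ⟨fun i => ⟨?_, fun v => Set.mem_univ v⟩, ?_, ?_⟩
  · -- matching
    rintro ⟨a, x⟩ -
    by_cases hu : auxUsed A col a i
    · obtain ⟨b, h, hc⟩ := hu
      refine ⟨(b, x), Or.inl ⟨⟨h, hc⟩, rfl⟩, ?_⟩
      rintro ⟨b', y⟩ (⟨⟨h', hc'⟩, rfl⟩ | ⟨rfl, hu', -⟩)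
      · obtain rfl := hinj a b' b h' h (by rw [hc', hc])
        rfl
      · exact absurd ⟨b, h, hc⟩ hu'
    · refine ⟨(a, flipb i x), Or.inr ⟨rfl, hu, rfl⟩, ?_⟩
      rintro ⟨b', y⟩ (⟨⟨h', hc'⟩, -⟩ | ⟨rfl, -, rfl⟩)
      · exact absurd ⟨b', h', hc'⟩ hu
      · rfl
  · -- disjoint
    intro i j hij
    rw [Set.disjoint_left]
    intro e hi hj
    induction e using Sym2.ind with
    | _ p q =>
      rw [SimpleGraph.Subgraph.mem_edgeSet] at hi hj
      rcases hi with ⟨⟨h, hc⟩, -⟩ | ⟨hpq, -, hy⟩ <;>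
        rcases hj with ⟨⟨h', hc'⟩, -⟩ | ⟨hpq', -, hy'⟩
      · exact hij (hc.symm.trans hc')
      · exact hirr q.1 (hpq' ▸ h)
      · exact hirr q.1 (hpq ▸ h')
      · exact hij (flipb_idx_eq (hy.symm.trans hy'))
  · -- union
    ext e
    induction e using Sym2.ind with
    | _ p q =>
      simp only [Set.mem_iUnion, SimpleGraph.Subgraph.mem_edgeSet, SimpleGraph.mem_edgeSet]
      constructor
      · rintro ⟨i, hi⟩
        exact (auxM A hsymm hirr col hcolsymm i).adj_sub hi
      · rintro (⟨h, hxy⟩ | ⟨hpq, i, hu, hy⟩)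
        · exact ⟨col p.1 q.1 h, Or.inl ⟨⟨h, rfl⟩, hxy⟩⟩
        · exact ⟨i, Or.inr ⟨hpq, hu, hy⟩⟩

theorem regular_of_oneFactorizable {W : Type*} {H : SimpleGraph W} {Δ : ℕ}
    (h : OneFactorizable H Δ) (w : W) : (H.neighborSet w).ncard = Δ := by
  obtain ⟨M, hpm, hdisj, hunion⟩ := h
  choose p hp hup using fun i => (hpm i).1 ((hpm i).2 w)
  have hinj : Function.Injective p := by
    intro i j hij
    by_contra hne
    exact Set.disjoint_left.mp (hdisj i j hne)
      (SimpleGraph.Subgraph.mem_edgeSet.mpr (hp i))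
      (SimpleGraph.Subgraph.mem_edgeSet.mpr (hij ▸ hp j))
  have hset : H.neighborSet w = Set.range p := by
    ext u
    constructor
    · intro hu
      have : s(w, u) ∈ ⋃ i, (M i).edgeSet := by
        rw [hunion]; exact H.mem_edgeSet.mpr hu
      obtain ⟨i, hi⟩ := Set.mem_iUnion.mp this
      exact ⟨i, (hup i u (SimpleGraph.Subgraph.mem_edgeSet.mp hi)).symm⟩
    · rintro ⟨i, rfl⟩
      exact (M i).adj_sub (hp i)
  rw [hset, ← Set.image_univ, Set.ncard_image_of_injective _ hinj, Set.ncard_univ,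
    Nat.card_eq_fintype_card, Fintype.card_fin]

/-- Every class 1 graph `G` embeds as a subgraph of a `Δ(G)`-regular
1-factorizable finite graph (whose maximum degree is therefore `Δ(G)`). -/
theorem class1_embeds_in_oneFactorizable {V : Type*} [Fintype V] [DecidableEq V]
    (G : SimpleGraph V) [DecidableRel G.Adj]
    (hclass1 : G.lineGraph.chromaticNumber = (G.maxDegree : ℕ∞)) :
    ∃ (W : Type) (_ : Finite W) (H : SimpleGraph W),
      (∀ w : W, (H.neighborSet w).ncard = G.maxDegree) ∧
      OneFactorizable H G.maxDegree ∧
      ∃ f : V → W, Function.Injective f ∧ ∀ v w, G.Adj v w → H.Adj (f v) (f w) := by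
  obtain ⟨C⟩ : G.lineGraph.Colorable G.maxDegree :=
    SimpleGraph.chromaticNumber_le_iff_colorable.mp (le_of_eq hclass1)
  set e : Fin (Fintype.card V) ≃ V := (Fintype.equivFin V).symm with he
  set A : Fin (Fintype.card V) → Fin (Fintype.card V) → Prop :=
    fun a b => G.Adj (e a) (e b) with hA
  have hsymm : ∀ a b, A a b → A b a := fun a b h => h.symm
  have hirr : ∀ a, ¬A a a := fun a h => G.loopless.irrefl _ h
  set col : ∀ a b, A a b → Fin G.maxDegree :=
    fun a b h => C ⟨s(e a, e b), G.mem_edgeSet.mpr h⟩ with hcoldef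
  have hcolsymm : ∀ a b (h : A a b), col a b h = col b a (hsymm a b h) :=
    fun a b h => congrArg C (Subtype.ext Sym2.eq_swap)
  have hinj : ∀ a b b' (h : A a b) (h' : A a b'), col a b h = col a b' h' → b = b' := by
    intro a b b' h h' hcc
    by_contra hne
    have hvne : e b ≠ e b' := fun hh => hne (e.injective hh)
    have hEne : (⟨s(e a, e b), G.mem_edgeSet.mpr h⟩ : G.edgeSet) ≠
        ⟨s(e a, e b'), G.mem_edgeSet.mpr h'⟩ :=
      fun hh => hvne (Sym2.congr_right.mp (Subtype.ext_iff.mp hh))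
    have hadj : G.lineGraph.Adj ⟨s(e a, e b), G.mem_edgeSet.mpr h⟩
        ⟨s(e a, e b'), G.mem_edgeSet.mpr h'⟩ :=
      SimpleGraph.lineGraph_adj_iff_exists.mpr
        ⟨hEne, e a, Sym2.mem_mk_left _ _, Sym2.mem_mk_left _ _⟩
    exact C.valid hadj hcc
  refine ⟨Fin (Fintype.card V) × (Fin G.maxDegree → Bool), inferInstance,
    auxGraph A hsymm hirr col, ?_, ?_, ?_⟩
  · exact regular_of_oneFactorizable
      ⟨auxM A hsymm hirr col hcolsymm, aux_factorization A hsymm hirr col hcolsymm hinj⟩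
  · exact ⟨auxM A hsymm hirr col hcolsymm, aux_factorization A hsymm hirr col hcolsymm hinj⟩
  · refine ⟨fun v => (e.symm v, fun _ => false), ?_, ?_⟩
    · intro v w hvw
      exact e.symm.injective (congrArg Prod.fst hvw)
    · intro v w hvw
      exact Or.inl ⟨show A (e.symm v) (e.symm w) by
        simpa [hA, Equiv.apply_symm_apply] using hvw, rfl⟩
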